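/- arXiv:2408.11633 — 2 statements merged into one kernel-verified Lean document; each statement's English description precedes it below -/
import Mathlib

section
/- For q > 3 and x ≥ 0 define f_q(x) = exp(((2q−1)^{2q} + x)^{1/(2q)}). Then f_q is convex on [0, ∞). -/
theorem convex_fq (q : ℝ) (hq : 3 < q) :
    ConvexOn ℝ (Set.Ici (0 : ℝ))
      (fun x : ℝ => Real.exp (((2 * q - 1) ^ (2 * q) + x) ^ (1 / (2 * q)))) := by
  have hq0 : (0:ℝ) < 2 * q := by linarith
  have hb : (1:ℝ) < 2 * q - 1 := by linarith
  set p : ℝ := 1 / (2 * q) with hp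
  set a : ℝ := (2 * q - 1) ^ (2 * q) with ha
  have hp0 : 0 < p := by positivity
  have hpq : p * (2 * q) = 1 := by rw [hp]; field_simp
  have hp1 : p < 1 := by nlinarith
  have ha0 : 0 < a := Real.rpow_pos_of_pos (by linarith) _
  set f : ℝ → ℝ := fun x : ℝ => Real.exp ((a + x) ^ p) with hf
  set F : ℝ → ℝ := fun x : ℝ => Real.exp ((a + x) ^ p) * (p * (a + x) ^ (p - 1)) with hF
  have key : ∀ x : ℝ, 0 ≤ x → HasDerivAt f (F x) x := by
    intro x hx
    have hax : 0 < a + x := by linarith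
    have hg : HasDerivAt (fun x : ℝ => (a + x) ^ p) (p * (a + x) ^ (p - 1)) x := by
      have := (Real.hasDerivAt_rpow_const (x := a + x) (p := p)
        (Or.inl hax.ne')).comp x ((hasDerivAt_id x).const_add a)
      simpa [Function.comp_def] using this
    simpa [hF, Function.comp_def] using (Real.hasDerivAt_exp ((a + x) ^ p)).comp x hg
  have keyF : ∀ x : ℝ, 0 ≤ x → HasDerivAt F
      (Real.exp ((a + x) ^ p) * (p * (a + x) ^ (p - 1)) * (p * (a + x) ^ (p - 1))
        + Real.exp ((a + x) ^ p) * (p * ((p - 1) * (a + x) ^ (p - 1 - 1)))) x := by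
    intro x hx
    have hax : 0 < a + x := by linarith
    have hg2 : HasDerivAt (fun x : ℝ => p * (a + x) ^ (p - 1))
        (p * ((p - 1) * (a + x) ^ (p - 1 - 1))) x := by
      have := ((Real.hasDerivAt_rpow_const (x := a + x) (p := p - 1)
        (Or.inl hax.ne')).comp x ((hasDerivAt_id x).const_add a)).const_mul p
      simpa using this
    exact (key x hx).mul hg2
  apply convexOn_of_deriv2_nonneg (convex_Ici 0)
  · intro x hx
    exact (key x hx).continuousAt.continuousWithinAt
  · intro x hx
    exact ((key x (interior_subset hx)).differentiableAt).differentiableWithinAt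
  · intro x hx
    have heq : deriv f =ᶠ[nhds x] F := by
      filter_upwards [Ioi_mem_nhds (by simpa using hx : (0:ℝ) < x)] with y hy
      exact (key y (le_of_lt hy)).deriv
    have : DifferentiableAt ℝ (deriv f) x :=
      (keyF x (le_of_lt (by simpa using hx))).differentiableAt.congr_of_eventuallyEq heq
    exact this.differentiableWithinAt
  · intro x hx
    have hx0 : (0:ℝ) < x := by simpa using hx
    have hax : 0 < a + x := by linarith
    have heq : deriv f =ᶠ[nhds x] F := by
      filter_upwards [Ioi_mem_nhds hx0] with y hy
      exact (key y (le_of_lt hy)).deriv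
    have h2 : deriv^[2] f x = Real.exp ((a + x) ^ p) * (p * (a + x) ^ (p - 1)) * (p * (a + x) ^ (p - 1))
        + Real.exp ((a + x) ^ p) * (p * ((p - 1) * (a + x) ^ (p - 1 - 1))) := by
      have : deriv (deriv f) x = deriv F x := heq.deriv_eq
      simp only [Function.iterate_succ, Function.iterate_zero, Function.comp_apply, id]
      rw [this, (keyF x hx0.le).deriv]
    rw [h2]
    -- now positivity of the second derivative
    have hap : 2 * q - 1 ≤ (a + x) ^ p := by
      have h1 : a ^ p = 2 * q - 1 := by
        rw [ha, ← Real.rpow_mul (by linarith : (0:ℝ) ≤ 2 * q - 1),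
          show 2 * q * p = 1 by rw [hp]; field_simp, Real.rpow_one]
      calc 2 * q - 1 = a ^ p := h1.symm
        _ ≤ (a + x) ^ p := Real.rpow_le_rpow ha0.le (by linarith) hp0.le
    have hmain : 0 ≤ p * (a + x) ^ p + (p - 1) := by
      have := mul_le_mul_of_nonneg_left hap hp0.le
      nlinarith
    have hsplit : (a + x) ^ (p - 1) * (a + x) ^ (p - 1)
        = (a + x) ^ (p - 1 - 1) * (a + x) ^ p := by
      rw [← Real.rpow_add hax, ← Real.rpow_add hax]; ring_nf
    have hE : 0 < Real.exp ((a + x) ^ p) := Real.exp_pos _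
    have hr : 0 ≤ (a + x) ^ (p - 1 - 1) := Real.rpow_nonneg hax.le _
    calc (0:ℝ) ≤ Real.exp ((a + x) ^ p) * p * (a + x) ^ (p - 1 - 1)
          * (p * (a + x) ^ p + (p - 1)) := by positivity
      _ = Real.exp ((a + x) ^ p) * (p * (a + x) ^ (p - 1)) * (p * (a + x) ^ (p - 1))
        + Real.exp ((a + x) ^ p) * (p * ((p - 1) * (a + x) ^ (p - 1 - 1))) := by
          rw [show Real.exp ((a + x) ^ p) * (p * (a + x) ^ (p - 1)) * (p * (a + x) ^ (p - 1))
            = Real.exp ((a + x) ^ p) * (p * p) * ((a + x) ^ (p - 1) * (a + x) ^ (p - 1)) by ring,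
            hsplit]
          ring
end

section
/- Let V be a finite set, ρ* ∈ (0,1), c_x(η) as in the reaction-diffusion model with F(ρ*) = 0, and ν = ν_{ρ*} the product Bernoulli(ρ*) measure on Ω = {0,1}^V. Let L^r f(η) = Σ_x c_x(η)(f(η^x) − f(η)) where η^x flips the coordinate at x. Then the adjoint in L²(ν) satisfies (L^r)*𝟙(η) = (λ/(2d ρ*)) Σ_x Σ_{y ∈ N(x)} η̄_x η̄_y, where η̄_z = η_z − ρ*. -/
lemma glauber_flip_flip {V : Type*} [DecidableEq V] (σ : V → Bool) (x : V) :
    Function.update (Function.update σ x (!σ x)) x (!(Function.update σ x (!σ x)) x) = σ := by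
  funext z
  by_cases hz : z = x <;> simp [Function.update, hz]

theorem glauber_adjoint_one (V : Type*) [Fintype V] [DecidableEq V]
    (a b lam ρ : ℝ) (ha : 0 < a) (hb : 0 < b) (hlam : -a < lam)
    (hρ : ρ ∈ Set.Ioo (0 : ℝ) 1)
    (hF : (a + lam * ρ) * (1 - ρ) - b * ρ = 0)
    (d : ℕ) (hd : 1 ≤ d)
    (N : V → Finset V) (hsym : ∀ x y, y ∈ N x ↔ x ∈ N y)
    (hself : ∀ x, x ∉ N x) (hcard : ∀ x, (N x).card = 2 * d)
    -- rates and measure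
    (c : (V → Bool) → V → ℝ)
    (hc : ∀ η x, c η x
      = (a + lam / (2 * d) * ∑ y ∈ N x, (if η y then (1 : ℝ) else 0)) *
          (1 - (if η x then (1 : ℝ) else 0))
        + b * (if η x then (1 : ℝ) else 0))
    (ν : (V → Bool) → ℝ)
    (hνdef : ∀ η, ν η = ∏ z : V, (if η z then ρ else 1 - ρ))
    (Lstar : ((V → Bool) → ℝ) → ((V → Bool) → ℝ))
    (hadj : ∀ f g : (V → Bool) → ℝ,
      ∑ η : V → Bool,
          (∑ x : V, c η x * (f (Function.update η x (!η x)) - f η)) * g η * ν η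
        = ∑ η : V → Bool, f η * Lstar g η * ν η)
    (η : V → Bool) :
    Lstar (fun _ => 1) η
      = lam / (2 * d * ρ) *
          ∑ x : V, ∑ y ∈ N x,
            ((if η x then (1 : ℝ) else 0) - ρ) * ((if η y then (1 : ℝ) else 0) - ρ) := by
  obtain ⟨hρ0, hρ1⟩ := hρ
  have hd0 : (0:ℝ) < 2 * d := by
    have : (1:ℝ) ≤ d := by exact_mod_cast hd
    linarith
  have hνpos : ∀ σ : V → Bool, 0 < ν σ := by
    intro σ
    rw [hνdef]
    exact Finset.prod_pos (fun z _ => by by_cases h : σ z <;> simp [h] <;> linarith)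
  -- delta function extraction
  have hdelta := hadj (fun σ => if σ = η then (1:ℝ) else 0) (fun _ => 1)
  have hleft : ∀ x : V,
      ∑ σ : V → Bool, c σ x * ((if Function.update σ x (!σ x) = η then (1:ℝ) else 0)
          - (if σ = η then (1:ℝ) else 0)) * ν σ
      = c (Function.update η x (!η x)) x * ν (Function.update η x (!η x)) - c η x * ν η := by
    intro x
    have hiff : ∀ σ : V → Bool, Function.update σ x (!σ x) = η ↔ σ = Function.update η x (!η x) := by
      intro σ
      constructor
      · intro h; rw [← h]; exact (glauber_flip_flip σ x).symm
      · intro h; subst h; exact glauber_flip_flip η x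
    have hne : Function.update η x (!η x) ≠ η := by
      intro h
      have := congrFun h x
      simp [Function.update] at this
    calc ∑ σ : V → Bool, c σ x * ((if Function.update σ x (!σ x) = η then (1:ℝ) else 0)
          - (if σ = η then (1:ℝ) else 0)) * ν σ
        = ∑ σ : V → Bool, ((if σ = Function.update η x (!η x) then c σ x * ν σ else 0)
            - (if σ = η then c σ x * ν σ else 0)) := by
          apply Finset.sum_congr rfl
          intro σ _
          simp only [hiff σ]
          by_cases h1 : σ = Function.update η x (!η x) <;> by_cases h2 : σ = η <;>
            simp [h1, h2] <;> ring
      _ = c (Function.update η x (!η x)) x * ν (Function.update η x (!η x)) - c η x * ν η := by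
          rw [Finset.sum_sub_distrib, Finset.sum_ite_eq' Finset.univ, Finset.sum_ite_eq' Finset.univ]
          simp
  have hkey : Lstar (fun _ => 1) η * ν η
      = ∑ x : V, (c (Function.update η x (!η x)) x * ν (Function.update η x (!η x)) - c η x * ν η) := by
    calc Lstar (fun _ => 1) η * ν η
        = ∑ σ : V → Bool, (if σ = η then (1:ℝ) else 0) * Lstar (fun _ => 1) σ * ν σ := by
          rw [Finset.sum_eq_single η]
          · simp [mul_comm]
          · intro σ _ hσ; simp [hσ]
          · intro h; exact absurd (Finset.mem_univ η) h
      _ = ∑ σ : V → Bool,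
            (∑ x : V, c σ x * ((if Function.update σ x (!σ x) = η then (1:ℝ) else 0)
              - (if σ = η then (1:ℝ) else 0))) * (fun _ => (1:ℝ)) σ * ν σ :=
          (hadj (fun σ => if σ = η then (1:ℝ) else 0) (fun _ => 1)).symm
      _ = ∑ σ : V → Bool, ∑ x : V,
            c σ x * ((if Function.update σ x (!σ x) = η then (1:ℝ) else 0)
              - (if σ = η then (1:ℝ) else 0)) * ν σ := by
          apply Finset.sum_congr rfl
          intro σ _
          simp [Finset.sum_mul]
      _ = ∑ x : V, ∑ σ : V → Bool,
            c σ x * ((if Function.update σ x (!σ x) = η then (1:ℝ) else 0)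
              - (if σ = η then (1:ℝ) else 0)) * ν σ := Finset.sum_comm
      _ = ∑ x : V, (c (Function.update η x (!η x)) x * ν (Function.update η x (!η x)) - c η x * ν η) :=
          Finset.sum_congr rfl (fun x _ => hleft x)
  -- per-site identity
  have hterm : ∀ x : V,
      c (Function.update η x (!η x)) x * ν (Function.update η x (!η x)) - c η x * ν η
      = (lam / (2 * d * ρ) * ∑ y ∈ N x,
          ((if η x then (1 : ℝ) else 0) - ρ) * ((if η y then (1 : ℝ) else 0) - ρ)) * ν η := by
    intro x
    set w : Bool → ℝ := fun s => if s then ρ else 1 - ρ with hw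
    set P : ℝ := ∏ z ∈ Finset.univ.erase x, w (η z) with hP
    have hν1 : ν η = w (η x) * P := by
      rw [hνdef, ← Finset.mul_prod_erase _ _ (Finset.mem_univ x)]
    have hν2 : ν (Function.update η x (!η x)) = w (!η x) * P := by
      rw [hνdef, ← Finset.mul_prod_erase _ _ (Finset.mem_univ x)]
      simp only [Function.update_self]
      congr 1
      apply Finset.prod_congr rfl
      intro z hz
      rw [Function.update_of_ne (Finset.ne_of_mem_erase hz)]
    set S : ℝ := ∑ y ∈ N x, (if η y then (1:ℝ) else 0) with hS
    have hSflip : ∑ y ∈ N x, (if Function.update η x (!η x) y then (1:ℝ) else 0) = S := by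
      apply Finset.sum_congr rfl
      intro y hy
      have hyx : y ≠ x := fun h => hself x (h ▸ hy)
      rw [Function.update_of_ne hyx]
    have hsum : ∑ y ∈ N x, ((if η x then (1:ℝ) else 0) - ρ) * ((if η y then (1:ℝ) else 0) - ρ)
        = ((if η x then (1:ℝ) else 0) - ρ) * (S - 2 * d * ρ) := by
      rw [← Finset.mul_sum, Finset.sum_sub_distrib, ← hS, Finset.sum_const, hcard]
      push_cast
      ring
    rw [hsum, hν1, hν2, hc, hc, hSflip, ← hS]
    have hdne : (2 * (d:ℝ)) ≠ 0 := ne_of_gt hd0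
    have hρne : ρ ≠ 0 := ne_of_gt hρ0
    have hbe : b = (a + lam * ρ) * (1 - ρ) / ρ := by
      field_simp
      linarith [hF]
    by_cases hx : η x
    · simp only [hx, Bool.not_true, if_true, if_false, Function.update_self, Bool.false_eq_true]
      simp only [hw, if_true, if_false, Bool.false_eq_true]
      rw [hbe]
      field_simp
      ring
    · simp only [hx, Bool.not_false, if_true, if_false, Function.update_self, Bool.false_eq_true]
      simp only [hw, if_true, if_false, Bool.false_eq_true]
      rw [hbe]
      field_simp
      ring
  -- conclude
  have := hkey.trans (Finset.sum_congr rfl (fun x _ => hterm x))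
  rw [← Finset.sum_mul, ← Finset.mul_sum] at this
  exact mul_right_cancel₀ (ne_of_gt (hνpos η)) this
end
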